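/- (Plücker/Jacobi determinant identity) Let M be an N × (N-2) matrix and let g, f, b, d be column vectors in ℝ^N. Then det(M,g,f)·det(M,b,d) − det(M,g,b)·det(M,f,d) + det(M,g,d)·det(M,f,b) = 0. -/

import Mathlib

open Matrix

private lemma plucker_abstract {V : Type*} [AddCommGroup V] [Module ℝ V]
    (D : V → V → ℝ)
    (hadd1 : ∀ x x' y, D (x + x') y = D x y + D x' y)
    (hsmul1 : ∀ (c : ℝ) (x y : V), D (c • x) y = c * D x y)
    (hadd2 : ∀ x y y', D x (y + y') = D x y + D x y')
    (hsmul2 : ∀ (c : ℝ) (x y : V), D x (c • y) = c * D x y)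
    (halt : ∀ z, D z z = 0)
    (W : Submodule ℝ V)
    (hW : ∀ w ∈ W, ∀ y, D w y = 0)
    (p1 p2 : V) (u v : V → ℝ)
    (hdecomp : ∀ x, x - (u x • p1 + v x • p2) ∈ W)
    (g f b d : V) :
    D g f * D b d - D g b * D f d + D g d * D f b = 0 := by
  have hsub1 : ∀ x x' y, D (x - x') y = D x y - D x' y := by
    intro x x' y
    have h := hadd1 (x - x') x' y
    rw [sub_add_cancel] at h
    linarith
  have hW2 : ∀ w ∈ W, ∀ x, D x w = 0 := by
    intro w hw x
    have h1 := halt (x + w)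
    rw [hadd1, hadd2, hadd2, halt, hW w hw x, hW w hw w] at h1
    linarith
  have hsub2 : ∀ x y y', D x (y - y') = D x y - D x y' := by
    intro x y y'
    have h := hadd2 x (y - y') y'
    rw [sub_add_cancel] at h
    linarith
  have hanti : D p2 p1 = - D p1 p2 := by
    have h := halt (p1 + p2)
    rw [hadd1, hadd2, hadd2, halt, halt] at h
    linarith
  have key : ∀ x y, D x y = (u x * v y - v x * u y) * D p1 p2 := by
    intro x y
    have hx : D x y = D (u x • p1 + v x • p2) y := by
      have h := hsub1 x (u x • p1 + v x • p2) y
      rw [hW _ (hdecomp x) y] at h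
      linarith
    have hy : D (u x • p1 + v x • p2) y
        = D (u x • p1 + v x • p2) (u y • p1 + v y • p2) := by
      have h := hsub2 (u x • p1 + v x • p2) y (u y • p1 + v y • p2)
      rw [hW2 _ (hdecomp y)] at h
      linarith
    rw [hx, hy, hadd1, hsmul1, hsmul1, hadd2, hadd2, hsmul2, hsmul2, hsmul2, hsmul2,
      halt, halt, hanti]
    ring
  rw [key g f, key b d, key g b, key f d, key g d, key f b]
  ring

/-- Plücker/Jacobi determinant identity: for an `(n+2) × n` matrix `M` and
column vectors `g, f, b, d`,
`det(M,g,f)·det(M,b,d) − det(M,g,b)·det(M,f,d) + det(M,g,d)·det(M,f,b) = 0`. -/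
theorem plucker_determinant_identity
    (n : ℕ) (M : Matrix (Fin (n + 2)) (Fin n) ℝ)
    (g f b d : Fin (n + 2) → ℝ)
    (A : (Fin (n + 2) → ℝ) → (Fin (n + 2) → ℝ) → Matrix (Fin (n + 2)) (Fin (n + 2)) ℝ)
    (hA : A = fun (x y : Fin (n + 2) → ℝ) => Matrix.of fun (i j : Fin (n + 2)) =>
        if h : (j : ℕ) < n then M i ⟨j, h⟩
        else if (j : ℕ) = n then x i else y i) :
    (A g f).det * (A b d).det - (A g b).det * (A f d).det
      + (A g d).det * (A f b).det = 0 := by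
  have hn1 : n < n + 2 := by omega
  have hn2 : n + 1 < n + 2 := by omega
  have hAapp : ∀ x y i j, A x y i j =
      if h : (j : ℕ) < n then M i ⟨j, h⟩ else if (j : ℕ) = n then x i else y i := by
    rw [hA]; intro x y i j; rfl
  set D : (Fin (n + 2) → ℝ) → (Fin (n + 2) → ℝ) → ℝ := fun x y => (A x y).det with hD
  have hupd1 : ∀ x x' y, (A x' y).updateCol ⟨n, hn1⟩ x = A x y := by
    intro x x' y
    ext i j
    rw [Matrix.updateCol_apply]
    by_cases hj : j = ⟨n, hn1⟩
    · subst hj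
      simp [hAapp]
    · rw [if_neg hj, hAapp, hAapp]
      have hjn : (j : ℕ) ≠ n := fun h => hj (Fin.ext h)
      rcases lt_or_ge (j : ℕ) n with h | h
      · rw [dif_pos h, dif_pos h]
      · rw [dif_neg (not_lt.mpr h), dif_neg (not_lt.mpr h), if_neg hjn, if_neg hjn]
  have hupd2 : ∀ x y y', (A x y').updateCol ⟨n + 1, hn2⟩ y = A x y := by
    intro x y y'
    ext i j
    rw [Matrix.updateCol_apply]
    by_cases hj : j = ⟨n + 1, hn2⟩
    · subst hj
      have h1 : ¬ ((n + 1 : ℕ) < n) := by omega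
      have h2 : (n + 1 : ℕ) ≠ n := by omega
      simp [hAapp, h1, h2]
    · rw [if_neg hj, hAapp, hAapp]
      have hjn : (j : ℕ) ≠ n + 1 := fun h => hj (Fin.ext h)
      rcases lt_or_ge (j : ℕ) n with h | h
      · rw [dif_pos h, dif_pos h]
      · have hje : (j : ℕ) = n := by have := j.isLt; omega
        rw [dif_neg (not_lt.mpr h), dif_neg (not_lt.mpr h), if_pos hje, if_pos hje]
  have hadd1 : ∀ x x' y, D (x + x') y = D x y + D x' y := by
    intro x x' y
    show (A (x + x') y).det = (A x y).det + (A x' y).det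
    rw [← hupd1 (x + x') 0 y, Matrix.det_updateCol_add, hupd1, hupd1]
  have hsmul1 : ∀ (c : ℝ) x y, D (c • x) y = c * D x y := by
    intro c x y
    show (A (c • x) y).det = c * (A x y).det
    rw [← hupd1 (c • x) 0 y, Matrix.det_updateCol_smul, hupd1]
  have hadd2 : ∀ x y y', D x (y + y') = D x y + D x y' := by
    intro x y y'
    show (A x (y + y')).det = (A x y).det + (A x y').det
    rw [← hupd2 x (y + y') 0, Matrix.det_updateCol_add, hupd2, hupd2]
  have hsmul2 : ∀ (c : ℝ) x y, D x (c • y) = c * D x y := by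
    intro c x y
    show (A x (c • y)).det = c * (A x y).det
    rw [← hupd2 x (c • y) 0, Matrix.det_updateCol_smul, hupd2]
  have halt : ∀ z, D z z = 0 := by
    intro z
    show (A z z).det = 0
    apply Matrix.det_zero_of_column_eq (i := (⟨n, hn1⟩ : Fin (n + 2))) (j := ⟨n + 1, hn2⟩)
    · exact Fin.ne_of_val_ne (show n ≠ n + 1 by omega)
    · intro k
      have h1 : ¬ ((n : ℕ) < n) := by omega
      have h2 : ¬ ((n + 1 : ℕ) < n) := by omega
      have h3 : (n + 1 : ℕ) ≠ n := by omega
      simp [hAapp, h1, h2, h3]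
  have hzero0 : ∀ y, D 0 y = 0 := by
    intro y
    have h := hsmul1 0 0 y
    rw [zero_smul, zero_mul] at h
    exact h
  set cols : Fin n → (Fin (n + 2) → ℝ) := fun j i => M i j with hcols
  by_cases hind : LinearIndependent ℝ cols
  · -- independent case
    set W : Submodule ℝ (Fin (n + 2) → ℝ) := Submodule.span ℝ (Set.range cols) with hWdef
    have hWD : ∀ w ∈ W, ∀ y, D w y = 0 := by
      intro w hw
      induction hw using Submodule.span_induction with
      | mem x h =>
        obtain ⟨k, rfl⟩ := h
        intro y
        show (A (cols k) y).det = 0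
        apply Matrix.det_zero_of_column_eq
          (i := (⟨(k : ℕ), by omega⟩ : Fin (n + 2))) (j := ⟨n, hn1⟩)
        · exact Fin.ne_of_val_ne (show (k : ℕ) ≠ n from k.isLt.ne)
        · intro i
          have h1 : ¬ ((n : ℕ) < n) := by omega
          simp [hAapp, k.isLt, h1, hcols]
      | zero => exact hzero0
      | add a b' ha hb iha ihb =>
        intro y
        have h := hadd1 a b' y
        rw [iha y, ihb y] at h
        simpa using h
      | smul c a ha iha =>
        intro y
        rw [hsmul1 c a y, iha y, mul_zero]
    have hfW : Module.finrank ℝ W = n := by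
      rw [hWdef, finrank_span_eq_card hind, Fintype.card_fin]
    have hfQ : Module.finrank ℝ ((Fin (n + 2) → ℝ) ⧸ W) = 2 := by
      have h1 := Submodule.finrank_quotient_add_finrank W
      rw [hfW, Module.finrank_fin_fun] at h1
      omega
    let B : Module.Basis (Fin 2) ℝ ((Fin (n + 2) → ℝ) ⧸ W) := Module.finBasisOfFinrankEq ℝ _ hfQ
    obtain ⟨p1, hp1⟩ := Submodule.Quotient.mk_surjective W (B 0)
    obtain ⟨p2, hp2⟩ := Submodule.Quotient.mk_surjective W (B 1)
    set u : (Fin (n + 2) → ℝ) → ℝ := fun x => B.repr (Submodule.Quotient.mk x) 0 with hu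
    set v : (Fin (n + 2) → ℝ) → ℝ := fun x => B.repr (Submodule.Quotient.mk x) 1 with hv
    have hdecomp : ∀ x, x - (u x • p1 + v x • p2) ∈ W := by
      intro x
      rw [← Submodule.Quotient.mk_eq_zero, Submodule.Quotient.mk_sub,
        Submodule.Quotient.mk_add, Submodule.Quotient.mk_smul, Submodule.Quotient.mk_smul,
        hp1, hp2, sub_eq_zero]
      have h := B.sum_repr (Submodule.Quotient.mk x)
      rw [Fin.sum_univ_two] at h
      exact h.symm
    exact plucker_abstract D hadd1 hsmul1 hadd2 hsmul2 halt W hWD p1 p2 u v hdecomp g f b d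
  · -- dependent case: every determinant vanishes
    have hzero : ∀ x y, D x y = 0 := by
      intro x y
      show (A x y).det = 0
      rw [← Matrix.exists_mulVec_eq_zero_iff]
      obtain ⟨c, hsum, i0, hi0⟩ := Fintype.not_linearIndependent_iff.mp hind
      refine ⟨fun j => if h : (j : ℕ) < n then c ⟨j, h⟩ else 0, ?_, ?_⟩
      · intro h0
        apply hi0
        have := congrFun h0 (⟨(i0 : ℕ), by omega⟩ : Fin (n + 2))
        simpa [i0.isLt] using this
      · funext i
        show ∑ j, A x y i j * _ = 0
        rw [Fin.sum_univ_castSucc, Fin.sum_univ_castSucc]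
        have hlast : ¬ (((Fin.last n).castSucc : Fin (n + 2)) : ℕ) < n := by
          rw [Fin.coe_castSucc, Fin.val_last]
          omega
        have hlast2 : ¬ ((Fin.last (n + 1) : Fin (n + 2)) : ℕ) < n := by
          rw [Fin.val_last]; omega
        rw [dif_neg hlast, dif_neg hlast2, mul_zero, mul_zero, add_zero, add_zero]
        have h := congrFun hsum i
        simp only [Finset.sum_apply, Pi.smul_apply, Pi.zero_apply, smul_eq_mul, hcols] at h
        have heq : ∑ j : Fin n,
            (A x y i j.castSucc.castSucc *
              if h : ((j.castSucc.castSucc : Fin (n + 2)) : ℕ) < n then c ⟨_, h⟩ else 0)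
            = ∑ j : Fin n, c j * M i j := by
          apply Finset.sum_congr rfl
          intro j _
          have hj : ((j.castSucc.castSucc : Fin (n + 2)) : ℕ) < n := by
            rw [Fin.coe_castSucc, Fin.coe_castSucc]; exact j.isLt
          rw [dif_pos hj, hAapp, dif_pos hj]
          have hmk : (⟨((j.castSucc.castSucc : Fin (n + 2)) : ℕ), hj⟩ : Fin n) = j := by
            apply Fin.ext
            rw [Fin.coe_castSucc, Fin.coe_castSucc]
          rw [hmk]
          ring
        rw [heq, h]
    show D g f * D b d - D g b * D f d + D g d * D f b = 0
    rw [hzero g f, hzero b d, hzero g b, hzero f d, hzero g d, hzero f b]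
    ring
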